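/- Let V, V_* be ℂ-vector spaces with a bilinear pairing, and W ⊆ V, W_* ⊆ V_* subspaces such that the restricted pairing W × W_* → ℂ has rank 1, with dim W ≥ 2 and dim W_* ≥ 2. Then the Lie algebra sl(W, W_*) := {x ∈ W ⊗ W_* : trace of x is 0} (trace of v⊗w being ⟨v,w⟩) is nilpotent of class exactly 2, i.e., [[g,g],g] = 0 but [g,g] ≠ 0. -/
import Mathlib


open TensorProduct

/-- If the pairing restricted to `W × W_*` has rank exactly 1 and `dim W ≥ 2`,
`dim W_* ≥ 2`, then `sl(W, W_*)` (trace-zero elements of `W ⊗ W_*`) is nilpotent of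
class exactly 2. -/
theorem stmt9 (V Vs : Type*) [AddCommGroup V] [Module ℂ V] [AddCommGroup Vs] [Module ℂ Vs]
    (B : V →ₗ[ℂ] Vs →ₗ[ℂ] ℂ)
    (W : Submodule ℂ V) (Ws : Submodule ℂ Vs)
    (m : (V ⊗[ℂ] Vs) →ₗ[ℂ] (V ⊗[ℂ] Vs) →ₗ[ℂ] (V ⊗[ℂ] Vs))
    (hm : ∀ (v : V) (w : Vs) (v' : V) (w' : Vs),
      m (v ⊗ₜ[ℂ] w) (v' ⊗ₜ[ℂ] w') = B v' w • (v ⊗ₜ[ℂ] w'))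
    (T : (V ⊗[ℂ] Vs) →ₗ[ℂ] ℂ) (hT : ∀ (v : V) (w : Vs), T (v ⊗ₜ[ℂ] w) = B v w)
    (ℓ : V →ₗ[ℂ] ℂ) (μ : Vs →ₗ[ℂ] ℂ)
    (hrank : ∀ v ∈ W, ∀ w ∈ Ws, B v w = ℓ v * μ w)
    (hℓ : ∃ v ∈ W, ℓ v ≠ 0) (hμ : ∃ w ∈ Ws, μ w ≠ 0)
    (hdW : 2 ≤ Module.rank ℂ W) (hdWs : 2 ≤ Module.rank ℂ Ws) :
    (∀ x ∈ Submodule.span ℂ {z : V ⊗[ℂ] Vs | ∃ v ∈ W, ∃ w ∈ Ws, z = v ⊗ₜ[ℂ] w},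
      T x = 0 →
     ∀ y ∈ Submodule.span ℂ {z : V ⊗[ℂ] Vs | ∃ v ∈ W, ∃ w ∈ Ws, z = v ⊗ₜ[ℂ] w},
      T y = 0 →
     ∀ z ∈ Submodule.span ℂ {z : V ⊗[ℂ] Vs | ∃ v ∈ W, ∃ w ∈ Ws, z = v ⊗ₜ[ℂ] w},
      T z = 0 →
        m (m x y - m y x) z - m z (m x y - m y x) = 0) ∧
    (∃ x ∈ Submodule.span ℂ {z : V ⊗[ℂ] Vs | ∃ v ∈ W, ∃ w ∈ Ws, z = v ⊗ₜ[ℂ] w},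
      T x = 0 ∧
     ∃ y ∈ Submodule.span ℂ {z : V ⊗[ℂ] Vs | ∃ v ∈ W, ∃ w ∈ Ws, z = v ⊗ₜ[ℂ] w},
      T y = 0 ∧ m x y - m y x ≠ 0) := by
  set S : Set (V ⊗[ℂ] Vs) := {z : V ⊗[ℂ] Vs | ∃ v ∈ W, ∃ w ∈ Ws, z = v ⊗ₜ[ℂ] w} with hS
  set SS := Submodule.span ℂ S with hSS
  -- contraction maps
  set P : (V ⊗[ℂ] Vs) →ₗ[ℂ] V :=
    (TensorProduct.rid ℂ V).toLinearMap ∘ₗ LinearMap.lTensor V μ with hPdef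
  set Q : (V ⊗[ℂ] Vs) →ₗ[ℂ] Vs :=
    (TensorProduct.lid ℂ Vs).toLinearMap ∘ₗ LinearMap.rTensor Vs ℓ with hQdef
  have hPt : ∀ (v : V) (w : Vs), P (v ⊗ₜ[ℂ] w) = μ w • v := by
    intro v w; simp [hPdef]
  have hQt : ∀ (v : V) (w : Vs), Q (v ⊗ₜ[ℂ] w) = ℓ v • w := by
    intro v w; simp [hQdef]
  -- P maps SS into W, Q into Ws
  have hPW : ∀ x ∈ SS, P x ∈ W := by
    intro x hx
    induction hx using Submodule.span_induction with
    | mem x h => obtain ⟨v, hv, w, hw, rfl⟩ := h; rw [hPt]; exact W.smul_mem _ hv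
    | zero => simp
    | add a b _ _ ha hb => rw [map_add]; exact W.add_mem ha hb
    | smul c a _ ha => rw [map_smul]; exact W.smul_mem _ ha
  have hQW : ∀ x ∈ SS, Q x ∈ Ws := by
    intro x hx
    induction hx using Submodule.span_induction with
    | mem x h => obtain ⟨v, hv, w, hw, rfl⟩ := h; rw [hQt]; exact Ws.smul_mem _ hw
    | zero => simp
    | add a b _ _ ha hb => rw [map_add]; exact Ws.add_mem ha hb
    | smul c a _ ha => rw [map_smul]; exact Ws.smul_mem _ ha
  -- traces
  have hTP : ∀ x ∈ SS, ℓ (P x) = T x := by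
    intro x hx
    induction hx using Submodule.span_induction with
    | mem x h =>
      obtain ⟨v, hv, w, hw, rfl⟩ := h
      rw [hPt, map_smul, hT, hrank v hv w hw, smul_eq_mul, mul_comm]
    | zero => simp
    | add a b _ _ ha hb => rw [map_add, map_add, map_add, ha, hb]
    | smul c a _ ha => rw [map_smul, map_smul, map_smul, ha]
  have hTQ : ∀ x ∈ SS, μ (Q x) = T x := by
    intro x hx
    induction hx using Submodule.span_induction with
    | mem x h =>
      obtain ⟨v, hv, w, hw, rfl⟩ := h
      rw [hQt, map_smul, hT, hrank v hv w hw, smul_eq_mul]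
    | zero => simp
    | add a b _ _ ha hb => rw [map_add, map_add, map_add, ha, hb]
    | smul c a _ ha => rw [map_smul, map_smul, map_smul, ha]
  -- multiplication formula on SS
  have hmul : ∀ x ∈ SS, ∀ z ∈ SS, m x z = (P x) ⊗ₜ[ℂ] (Q z) := by
    intro x hx
    induction hx using Submodule.span_induction with
    | mem x h =>
      obtain ⟨v, hv, w, hw, rfl⟩ := h
      intro z hz
      induction hz using Submodule.span_induction with
      | mem z h' =>
        obtain ⟨v', hv', w', hw', rfl⟩ := h'
        rw [hm, hrank v' hv' w hw, hPt, hQt, smul_tmul_smul, mul_comm]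
      | zero => simp
      | add a b _ _ ha hb => rw [map_add, ha, hb, map_add, tmul_add]
      | smul c a _ ha => rw [map_smul, ha, map_smul, tmul_smul]
    | zero => intro z hz; simp
    | add a b ha' hb' ha hb =>
      intro z hz
      rw [map_add, LinearMap.add_apply, ha z hz, hb z hz, map_add, add_tmul]
    | smul c a ha' ha =>
      intro z hz
      rw [map_smul, LinearMap.smul_apply, ha z hz, map_smul, smul_tmul']
  -- membership of products in SS
  have hmemS : ∀ v ∈ W, ∀ w ∈ Ws, v ⊗ₜ[ℂ] w ∈ SS := by
    intro v hv w hw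
    exact Submodule.subset_span ⟨v, hv, w, hw, rfl⟩
  constructor
  · intro x hx hTx y hy hTy z hz hTz
    have hc : m x y - m y x = (P x) ⊗ₜ[ℂ] (Q y) - (P y) ⊗ₜ[ℂ] (Q x) := by
      rw [hmul x hx y hy, hmul y hy x hx]
    have hcS : m x y - m y x ∈ SS := by
      rw [hc]
      exact SS.sub_mem (hmemS _ (hPW x hx) _ (hQW y hy)) (hmemS _ (hPW y hy) _ (hQW x hx))
    have hPc : P (m x y - m y x) = 0 := by
      rw [hc, map_sub, hPt, hPt, hTQ y hy, hTQ x hx, hTx, hTy, zero_smul, zero_smul, sub_zero]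
    have hQc : Q (m x y - m y x) = 0 := by
      rw [hc, map_sub, hQt, hQt, hTP y hy, hTP x hx, hTx, hTy, zero_smul, zero_smul, sub_zero]
    rw [hmul _ hcS z hz, hmul z hz _ hcS, hPc, hQc, zero_tmul, tmul_zero, sub_zero]
  · -- find v1 ∈ W, v1 ≠ 0, ℓ v1 = 0
    obtain ⟨v0, hv0, hℓv0⟩ := hℓ
    obtain ⟨w0, hw0, hμw0⟩ := hμ
    have hv1 : ∃ v1 ∈ W, v1 ≠ 0 ∧ ℓ v1 = 0 := by
      by_contra h
      push_neg at h
      have hinj : Function.Injective (ℓ ∘ₗ W.subtype) := by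
        rw [← LinearMap.ker_eq_bot, LinearMap.ker_eq_bot']
        intro u hu
        by_contra hu0
        exact absurd (h u.1 u.2 (fun h0 => hu0 (Subtype.ext h0))) (not_ne_iff.mpr hu)
      have h1 := (ℓ ∘ₗ W.subtype).lift_rank_le_of_injective hinj
      rw [Module.rank_self] at h1
      have h2 := (Cardinal.lift_le.mpr hdW).trans h1
      norm_num [Cardinal.lift_ofNat, Cardinal.lift_one] at h2
    have hw1 : ∃ w1 ∈ Ws, w1 ≠ 0 ∧ μ w1 = 0 := by
      by_contra h
      push_neg at h
      have hinj : Function.Injective (μ ∘ₗ Ws.subtype) := by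
        rw [← LinearMap.ker_eq_bot, LinearMap.ker_eq_bot']
        intro u hu
        by_contra hu0
        exact absurd (h u.1 u.2 (fun h0 => hu0 (Subtype.ext h0))) (not_ne_iff.mpr hu)
      have h1 := (μ ∘ₗ Ws.subtype).lift_rank_le_of_injective hinj
      rw [Module.rank_self] at h1
      have h2 := (Cardinal.lift_le.mpr hdWs).trans h1
      norm_num [Cardinal.lift_ofNat, Cardinal.lift_one] at h2
    obtain ⟨v1, hv1W, hv1ne, hℓv1⟩ := hv1
    obtain ⟨w1, hw1W, hw1ne, hμw1⟩ := hw1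
    refine ⟨v1 ⊗ₜ[ℂ] w0, hmemS _ hv1W _ hw0, ?_, v0 ⊗ₜ[ℂ] w1, hmemS _ hv0 _ hw1W, ?_, ?_⟩
    · rw [hT, hrank v1 hv1W w0 hw0, hℓv1, zero_mul]
    · rw [hT, hrank v0 hv0 w1 hw1W, hμw1, mul_zero]
    · rw [hm, hm, hrank v0 hv0 w0 hw0, hrank v1 hv1W w1 hw1W, hℓv1, hμw1, mul_zero,
        zero_smul, sub_zero]
      intro hcontra
      -- apply dual functionals to v1 ⊗ w1
      obtain ⟨φ, hφ⟩ : ∃ φ : Module.Dual ℂ V, φ v1 ≠ 0 := by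
        by_contra h
        push_neg at h
        exact hv1ne ((Module.forall_dual_apply_eq_zero_iff ℂ v1).mp h)
      obtain ⟨ψ, hψ⟩ : ∃ ψ : Module.Dual ℂ Vs, ψ w1 ≠ 0 := by
        by_contra h
        push_neg at h
        exact hw1ne ((Module.forall_dual_apply_eq_zero_iff ℂ w1).mp h)
      have happ := congrArg
        ((TensorProduct.lid ℂ ℂ).toLinearMap ∘ₗ TensorProduct.map φ ψ) hcontra
      simp only [map_smul, map_zero, LinearMap.comp_apply, TensorProduct.map_tmul,
        LinearEquiv.coe_coe, TensorProduct.lid_tmul, smul_eq_mul] at happ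
      exact (mul_ne_zero (mul_ne_zero hℓv0 hμw0) (mul_ne_zero hφ hψ)) happ
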